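/- For every n > 2 there is a cake instance with n players and an envy-free partial connected division that gives each of the players 2, ..., n-1 exactly twice the utility they receive in any envy-free complete connected division, while players 1 and n receive at least as much as in any envy-free complete connected division. -/

import Mathlib

open MeasureTheory Set
open scoped ENNReal

/-- A connected division of the cake `[0,1]` among `n` players: each player gets an
open interval, the intervals are pairwise disjoint and contained in `[0,1]`. -/
structure ConnDiv (n : ℕ) where
  pieces : Fin n → Set ℝ
  isInterval : ∀ i, ∃ a b : ℝ, pieces i = Set.Ioo a b
  subset : ∀ i, pieces i ⊆ Set.Icc (0:ℝ) 1
  disj : Pairwise fun i j => Disjoint (pieces i) (pieces j)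

/-- A connected division is complete if the closures of the pieces cover `[0,1]`. -/
def ConnDiv.Complete {n : ℕ} (d : ConnDiv n) : Prop :=
  Set.Icc (0:ℝ) 1 ⊆ ⋃ i, closure (d.pieces i)

/-- Envy-freeness: every player weakly prefers her own piece. -/
def EnvyFree {n : ℕ} (v : Fin n → Measure ℝ) (d : ConnDiv n) : Prop :=
  ∀ i j, v i (d.pieces j) ≤ v i (d.pieces i)

/-- Utilitarian welfare: sum of own-piece values. -/
noncomputable def util {n : ℕ} (v : Fin n → Measure ℝ) (d : ConnDiv n) : ℝ≥0∞ :=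
  ∑ i, v i (d.pieces i)

/-- Egalitarian welfare: minimum own-piece value. -/
noncomputable def egal {n : ℕ} (v : Fin n → Measure ℝ) (d : ConnDiv n) : ℝ≥0∞ :=
  ⨅ i, v i (d.pieces i)

/-- The uniform measure of total mass `m` on the interval `(a,b)`. -/
noncomputable def unifOn (a b m : ℝ) : Measure ℝ :=
  ENNReal.ofReal (m / (b - a)) • volume.restrict (Set.Ioo a b)

noncomputable def epsn (n : ℕ) : ℝ := 1/(4*(n:ℝ)^2)

noncomputable def ctr (n k : ℕ) : ℝ := ((k:ℝ)+1)/(n:ℝ)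

noncomputable def cakeM (n : ℕ) (i : Fin n) : Measure ℝ :=
  if i.val = n-1 then unifOn 0 1 1
  else unifOn (ctr n i.val - epsn n) (ctr n i.val + epsn n) 1

lemma unifOn_apply (a b m : ℝ) (S : Set ℝ) :
    unifOn a b m S = ENNReal.ofReal (m/(b-a)) * volume (S ∩ Set.Ioo a b) := by
  rw [unifOn, Measure.smul_apply, smul_eq_mul, Measure.restrict_apply' measurableSet_Ioo]

lemma unifOn_Ioo (a b u w : ℝ) (h : a < b) :
    unifOn a b 1 (Set.Ioo u w) = ENNReal.ofReal ((min w b - max u a)/(b-a)) := by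
  rw [unifOn_apply, Set.Ioo_inter_Ioo, Real.volume_Ioo,
    ← ENNReal.ofReal_mul (div_nonneg zero_le_one (by linarith) : (0:ℝ) ≤ 1/(b-a))]
  congr 1
  field_simp

lemma unifOn_singleton (a b m t : ℝ) : unifOn a b m {t} = 0 := by
  rw [unifOn_apply]
  have : volume (({t} : Set ℝ) ∩ Set.Ioo a b) = 0 :=
    le_antisymm (le_trans (measure_mono Set.inter_subset_left) (by simp)) zero_le
  rw [this, mul_zero]

lemma unifOn_total (a b : ℝ) (h : a < b) (S : Set ℝ) (hS : Set.Ioo a b ⊆ S) :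
    unifOn a b 1 S = 1 := by
  rw [unifOn_apply, Set.inter_eq_self_of_subset_right hS, Real.volume_Ioo,
    ← ENNReal.ofReal_mul (div_nonneg zero_le_one (by linarith) : (0:ℝ) ≤ 1/(b-a))]
  rw [one_div_mul_cancel (by linarith : b - a ≠ 0)]
  simp

lemma unifOn_le_one (a b : ℝ) (h : a < b) (S : Set ℝ) : unifOn a b 1 S ≤ 1 := by
  calc unifOn a b 1 S ≤ unifOn a b 1 Set.univ := measure_mono (Set.subset_univ S)
  _ = 1 := unifOn_total a b h _ (Set.subset_univ _)

lemma unifOn_compl_zero (a b : ℝ) (h : Set.Ioo a b ⊆ Set.Icc 0 1) :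
    unifOn a b 1 (Set.Icc (0:ℝ) 1)ᶜ = 0 := by
  rw [unifOn_apply]
  have : (Set.Icc (0:ℝ) 1)ᶜ ∩ Set.Ioo a b = ∅ := by
    rw [Set.eq_empty_iff_forall_notMem]
    rintro t ⟨ht1, ht2⟩
    exact ht1 (h ht2)
  rw [this]
  simp

lemma nR_pos {n : ℕ} (hn : 2 < n) : (0:ℝ) < n := by
  have : (0:ℕ) < n := by omega
  exact_mod_cast this

lemma nR3 {n : ℕ} (hn : 2 < n) : (3:ℝ) ≤ n := by
  have : (3:ℕ) ≤ n := by omega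
  exact_mod_cast this

lemma eps_pos {n : ℕ} (hn : 2 < n) : 0 < epsn n := by
  have := nR_pos hn
  unfold epsn
  positivity

lemma eps_small {n : ℕ} (hn : 2 < n) : epsn n * ((n:ℝ)+1) ≤ 1/(n:ℝ) := by
  have h3 := nR3 hn
  have h0 := nR_pos hn
  unfold epsn
  rw [div_mul_eq_mul_div, div_le_div_iff₀ (by positivity) h0]
  nlinarith [sq_nonneg ((n:ℝ))]

lemma ctr_lb {n : ℕ} (hn : 2 < n) (k : ℕ) : 1/(n:ℝ) ≤ ctr n k := by
  have h0 := nR_pos hn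
  unfold ctr
  rw [div_le_div_iff_of_pos_right h0]
  have : (0:ℝ) ≤ k := Nat.cast_nonneg k
  linarith

lemma ctr_ub {n : ℕ} (hn : 2 < n) (k : ℕ) (hk : k ≤ n - 2) : ctr n k ≤ 1 - 1/(n:ℝ) := by
  have h0 := nR_pos hn
  have hkR : (k:ℝ) ≤ (n:ℝ) - 2 := by
    have : (k:ℝ) ≤ ((n-2 : ℕ) : ℝ) := by exact_mod_cast hk
    rwa [Nat.cast_sub (by omega)] at this
  unfold ctr
  rw [div_le_iff₀ h0]
  have : (1 - 1/(n:ℝ)) * n = n - 1 := by field_simp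
  rw [this]
  linarith

lemma eps_lt_invn {n : ℕ} (hn : 2 < n) : 2 * epsn n < 1/(n:ℝ) := by
  have h3 := nR3 hn
  have he := eps_pos hn
  have hes := eps_small hn
  nlinarith

lemma windowSub {n : ℕ} (hn : 2 < n) (k : ℕ) (hk : k ≤ n - 2) :
    Set.Ioo (ctr n k - epsn n) (ctr n k + epsn n) ⊆ Set.Icc 0 1 := by
  have h0 := nR_pos hn
  have he := eps_pos hn
  have h2e := eps_lt_invn hn
  have hc1 := ctr_lb hn k
  have hc2 := ctr_ub hn k hk
  intro t ht
  obtain ⟨ht1, ht2⟩ := ht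
  constructor <;> nlinarith

lemma fin_ne_last {n : ℕ} (i : Fin n) (hi : i.val ≠ n-1) : i.val ≤ n-2 := by
  have := i.isLt; omega

lemma window_lt {n : ℕ} (hn : 2 < n) (k : ℕ) : ctr n k - epsn n < ctr n k + epsn n := by
  have := eps_pos hn; linarith

lemma cakeM_w_Ioo {n : ℕ} (hn : 2 < n) (i : Fin n) (hi : i.val ≠ n-1) (u w : ℝ) :
    cakeM n i (Set.Ioo u w) =
      ENNReal.ofReal ((min w (ctr n i.val + epsn n) - max u (ctr n i.val - epsn n))/(2*epsn n)) := by
  rw [cakeM, if_neg hi, unifOn_Ioo _ _ _ _ (window_lt hn _)]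
  congr 1
  rw [show ctr n i.val + epsn n - (ctr n i.val - epsn n) = 2*epsn n by ring]

lemma cakeM_L_Ioo {n : ℕ} (i : Fin n) (hi : i.val = n-1) (u w : ℝ) :
    cakeM n i (Set.Ioo u w) = ENNReal.ofReal (min w 1 - max u 0) := by
  rw [cakeM, if_pos hi, unifOn_Ioo _ _ _ _ one_pos]
  norm_num

lemma cakeM_Icc {n : ℕ} (hn : 2 < n) (i : Fin n) : cakeM n i (Set.Icc 0 1) = 1 := by
  rw [cakeM]
  split
  · exact unifOn_total _ _ one_pos _ Set.Ioo_subset_Icc_self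
  · exact unifOn_total _ _ (window_lt hn _) _ (windowSub hn _ (fin_ne_last i (by assumption)))

lemma cakeM_singleton {n : ℕ} (i : Fin n) (t : ℝ) : cakeM n i {t} = 0 := by
  rw [cakeM]; split <;> exact unifOn_singleton _ _ _ _

lemma cakeM_compl {n : ℕ} (hn : 2 < n) (i : Fin n) : cakeM n i (Set.Icc (0:ℝ) 1)ᶜ = 0 := by
  rw [cakeM]
  split
  · exact unifOn_compl_zero _ _ Set.Ioo_subset_Icc_self
  · exact unifOn_compl_zero _ _ (windowSub hn _ (fin_ne_last i (by assumption)))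

lemma cakeM_le_one {n : ℕ} (hn : 2 < n) (i : Fin n) (S : Set ℝ) : cakeM n i S ≤ 1 := by
  rw [cakeM]
  split
  · exact unifOn_le_one _ _ one_pos _
  · exact unifOn_le_one _ _ (window_lt hn _) _

lemma Ioo_sub_Icc {A B : ℝ} (h : A < B) (hs : Set.Ioo A B ⊆ Set.Icc 0 1) : 0 ≤ A ∧ B ≤ 1 := by
  constructor
  · by_contra hA
    push_neg at hA
    have hm : A < min B 0 := lt_min h hA
    have ht : (A + min B 0)/2 ∈ Set.Ioo A B := by
      have := min_le_left B 0
      exact ⟨by linarith, by linarith⟩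
    have h1 := (hs ht).1
    have h0 : min B 0 ≤ 0 := min_le_right _ _
    linarith
  · by_contra hB
    push_neg at hB
    have hm : max A 1 < B := max_lt h hB
    have ht : (max A 1 + B)/2 ∈ Set.Ioo A B := by
      have := le_max_left A 1
      exact ⟨by linarith, by linarith⟩
    have h1 := (hs ht).2
    have h0 : (1:ℝ) ≤ max A 1 := le_max_right _ _
    linarith

lemma disjoint_Ioo_cases {a b a' b' : ℝ} (h : Disjoint (Set.Ioo a b) (Set.Ioo a' b'))
    (h1 : a < b) (h2 : a' < b') : b ≤ a' ∨ b' ≤ a := by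
  by_contra hc
  push_neg at hc
  obtain ⟨hc1, hc2⟩ := hc
  have hma : a ≤ max a a' := le_max_left _ _
  have hma' : a' ≤ max a a' := le_max_right _ _
  have hmb : min b b' ≤ b := min_le_left _ _
  have hmb' : min b b' ≤ b' := min_le_right _ _
  have hmm : max a a' < min b b' := by
    rcases max_cases a a' with ⟨he,_⟩|⟨he,_⟩ <;> rcases min_cases b b' with ⟨he2,_⟩|⟨he2,_⟩ <;>
      rw [he, he2] <;> linarith
  have ht : (max a a' + min b b')/2 ∈ Set.Ioo a b ∩ Set.Ioo a' b' :=
    ⟨⟨by linarith, by linarith⟩, ⟨by linarith, by linarith⟩⟩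
  exact (Set.disjoint_left.mp h) ht.1 ht.2

noncomputable def ylep (n : ℕ) (i : Fin n) : ℝ :=
  if i.val = n-1 then 0 else if i.val = 0 then 1/(n:ℝ)
  else ((i.val:ℝ)+1)*(1/(n:ℝ) - epsn n)

noncomputable def yrep (n : ℕ) (i : Fin n) : ℝ :=
  if i.val = n-1 then 1/(n:ℝ) else if i.val = 0 then 2/(n:ℝ) - 2*epsn n
  else ((i.val:ℝ)+2)*(1/(n:ℝ) - epsn n)

lemma cast_sub2 {n k : ℕ} (hn : 2 < n) (hk : k ≤ n - 2) : (k:ℝ) ≤ (n:ℝ) - 2 := by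
  have : (k:ℝ) ≤ ((n-2 : ℕ) : ℝ) := by exact_mod_cast hk
  rwa [Nat.cast_sub (by omega)] at this

lemma q_pos {n : ℕ} (hn : 2 < n) : 0 < 1/(n:ℝ) - epsn n := by
  have := eps_lt_invn hn; have := eps_pos hn; linarith

lemma disj_of_le {a b c d : ℝ} (h : b ≤ c) : Disjoint (Set.Ioo a b) (Set.Ioo c d) := by
  rw [Set.disjoint_left]
  rintro t ⟨_, h1⟩ ⟨h2, _⟩
  linarith

lemma y_lt {n : ℕ} (hn : 2 < n) (i : Fin n) : ylep n i < yrep n i := by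
  have h0 := nR_pos hn
  have he := eps_pos hn
  have h2e := eps_lt_invn hn
  have hq := q_pos hn
  by_cases hi1 : i.val = n-1
  · simp [ylep, yrep, hi1]; positivity
  · have h01 : ¬((0:ℕ) = n-1) := by omega
    by_cases hi0 : i.val = 0
    · simp only [ylep, yrep, hi1, hi0, h01, if_false, if_true]
      have hd : (2:ℝ)/(n:ℝ) = 2 * (1/(n:ℝ)) := by ring
      have hi : ((n:ℝ))⁻¹ = 1/(n:ℝ) := by ring
      linarith
    · simp only [ylep, yrep, hi1, hi0, if_neg, if_false]
      have : (i.val:ℝ) + 1 < (i.val:ℝ) + 2 := by linarith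
      nlinarith

lemma y_ord {n : ℕ} (hn : 2 < n) (i j : Fin n) (hiv : i.val < j.val) (hj1 : j.val ≠ n-1) :
    yrep n i ≤ ylep n j := by
  have h0 := nR_pos hn
  have he := eps_pos hn
  have h2e := eps_lt_invn hn
  have hq := q_pos hn
  have hj0 : j.val ≠ 0 := by omega
  have hj1R : (1:ℝ) ≤ (j.val:ℝ) := by exact_mod_cast Nat.one_le_iff_ne_zero.mpr hj0
  simp only [ylep, yrep, hj1, hj0, if_false]
  by_cases hi1 : i.val = n-1
  · omega
  · by_cases hi0 : i.val = 0
    · have h01 : ¬((0:ℕ) = n-1) := by omega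
      simp only [hi1, hi0, h01, if_true, if_false]
      have hd : (2:ℝ)/(n:ℝ) = 2 * (1/(n:ℝ)) := by ring
      nlinarith [mul_nonneg (by linarith : (0:ℝ) ≤ (j.val:ℝ) - 1) (le_of_lt (q_pos hn))]
    · simp only [hi1, hi0, if_false]
      have hij : (i.val:ℝ) + 1 ≤ (j.val:ℝ) := by exact_mod_cast hiv
      nlinarith

lemma y_last_ord {n : ℕ} (hn : 2 < n) (j : Fin n) (hj1 : j.val ≠ n-1) :
    yrep n ⟨n-1, Nat.sub_one_lt_of_lt hn⟩ ≤ ylep n j := by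
  have h0 := nR_pos hn
  have he := eps_pos hn
  have h2e := eps_lt_invn hn
  have hq := q_pos hn
  have hj1R : j.val = 0 ∨ (1:ℝ) ≤ (j.val:ℝ) := by
    rcases Nat.eq_zero_or_pos j.val with h|h
    · exact Or.inl h
    · exact Or.inr (by exact_mod_cast h)
  simp only [yrep, ylep, hj1, if_true, if_pos rfl]
  rcases hj1R with h|h
  · simp [h, hj1]
  · have hj0 : j.val ≠ 0 := by
      intro hc; rw [hc] at h; norm_num at h
    simp only [hj0, if_false, hj1]
    nlinarith

noncomputable def ydiv (n : ℕ) (hn : 2 < n) : ConnDiv n where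
  pieces i := Set.Ioo (ylep n i) (yrep n i)
  isInterval i := ⟨ylep n i, yrep n i, rfl⟩
  subset i := by
    have h0 := nR_pos hn
    have he := eps_pos hn
    have h2e := eps_lt_invn hn
    have hq := q_pos hn
    have h3 := nR3 hn
    refine Set.Ioo_subset_Icc_self.trans (Set.Icc_subset_Icc ?_ ?_)
    · by_cases hi1 : i.val = n-1
      · simp [ylep, hi1]
      · by_cases hi0 : i.val = 0
        · have h01 : ¬((0:ℕ) = n-1) := by omega
          simp only [ylep, hi1, hi0, h01, if_false, if_true]; positivity
        · simp only [ylep, hi1, hi0, if_false]; positivity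
    · by_cases hi1 : i.val = n-1
      · simp only [yrep, hi1, if_true, if_pos rfl]
        rw [div_le_one h0]; linarith
      · by_cases hi0 : i.val = 0
        · have h01 : ¬((0:ℕ) = n-1) := by omega
          simp only [yrep, hi1, hi0, h01, if_false, if_true]
          have h23 : 2/(n:ℝ) ≤ 1 := by rw [div_le_one h0]; linarith
          have hd : (2:ℝ)/(n:ℝ) = 2 * (1/(n:ℝ)) := by ring
          linarith
        · simp only [yrep, hi1, hi0, if_false]
          have hkR : (i.val:ℝ) ≤ (n:ℝ) - 2 := cast_sub2 hn (fin_ne_last i hi1)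
          have : ((i.val:ℝ)+2)*(1/(n:ℝ) - epsn n) ≤ (n:ℝ)*(1/(n:ℝ) - epsn n) := by
            nlinarith
          have h2 : (n:ℝ)*(1/(n:ℝ) - epsn n) = 1 - n*epsn n := by field_simp
          nlinarith
  disj := by
    intro i j hij
    rcases Nat.lt_or_ge i.val j.val with h|h
    · by_cases hj1 : j.val = n-1
      · have hi1 : i.val ≠ n-1 := by omega
        have hj : j = (⟨n-1, by omega⟩ : Fin n) := Fin.ext hj1
        rw [hj]
        exact (disj_of_le (y_last_ord hn i hi1)).symm
      · exact disj_of_le (y_ord hn i j h hj1)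
    · have h' : j.val < i.val := by omega
      by_cases hi1 : i.val = n-1
      · have hj1 : j.val ≠ n-1 := by omega
        have hi : i = (⟨n-1, by omega⟩ : Fin n) := Fin.ext hi1
        rw [hi]
        exact disj_of_le (y_last_ord hn j hj1)
      · exact (disj_of_le (y_ord hn j i h' hi1)).symm

lemma ydiv_piece_mid {n : ℕ} (hn : 2 < n) (i : Fin n) (hi1 : i.val ≠ n-1) (hi0 : i.val ≠ 0) :
    (ydiv n hn).pieces i =
      Set.Ioo (((i.val:ℝ)+1)*(1/(n:ℝ)-epsn n)) (((i.val:ℝ)+2)*(1/(n:ℝ)-epsn n)) := by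
  simp [ydiv, ylep, yrep, hi1, hi0]

lemma ydiv_piece_zero {n : ℕ} (hn : 2 < n) (i : Fin n) (hi0 : i.val = 0) :
    (ydiv n hn).pieces i = Set.Ioo (1/(n:ℝ)) (2/(n:ℝ) - 2*epsn n) := by
  have h01 : ¬((0:ℕ) = n-1) := by omega
  simp [ydiv, ylep, yrep, hi0, h01]

lemma ydiv_piece_last {n : ℕ} (hn : 2 < n) (i : Fin n) (hi1 : i.val = n-1) :
    (ydiv n hn).pieces i = Set.Ioo 0 (1/(n:ℝ)) := by
  simp [ydiv, ylep, yrep, hi1]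

lemma ydiv_val_mid {n : ℕ} (hn : 2 < n) (i : Fin n) (hi1 : i.val ≠ n-1) (hi0 : i.val ≠ 0) :
    cakeM n i ((ydiv n hn).pieces i) = 1 := by
  have h0 := nR_pos hn
  have he := eps_pos hn
  have hes := eps_small hn
  have hkR : (i.val:ℝ) ≤ (n:ℝ) - 2 := cast_sub2 hn (fin_ne_last i hi1)
  have hiN : (0:ℝ) ≤ (i.val:ℝ) := Nat.cast_nonneg _
  rw [ydiv_piece_mid hn i hi1 hi0, cakeM, if_neg hi1]
  apply unifOn_total _ _ (window_lt hn _)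
  apply Set.Ioo_subset_Ioo
  · unfold ctr
    have hr : ((i.val:ℝ)+1)/(n:ℝ) = ((i.val:ℝ)+1)*(1/(n:ℝ)) := by ring
    rw [hr]
    nlinarith [mul_nonneg hiN he.le]
  · unfold ctr
    have hr : ((i.val:ℝ)+1)/(n:ℝ) = ((i.val:ℝ)+1)*(1/(n:ℝ)) := by ring
    rw [hr]
    nlinarith [mul_nonneg (by linarith : (0:ℝ) ≤ (n:ℝ)-2-(i.val:ℝ)) he.le]

lemma ctr_zero {n : ℕ} : ctr n 0 = 1/(n:ℝ) := by
  unfold ctr; norm_num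

lemma ydiv_val0_own {n : ℕ} (hn : 2 < n) (i : Fin n) (hi0 : i.val = 0) :
    cakeM n i ((ydiv n hn).pieces i) = ENNReal.ofReal (1/2) := by
  have h0 := nR_pos hn
  have he := eps_pos hn
  have hes := eps_small hn
  have h3 := nR3 hn
  have h3e : 3 * epsn n ≤ 1/(n:ℝ) := by nlinarith
  have hd : (2:ℝ)/(n:ℝ) = 2 * (1/(n:ℝ)) := by ring
  rw [ydiv_piece_zero hn i hi0, cakeM_w_Ioo hn i (by omega), hi0, ctr_zero]
  congr 1
  rw [min_eq_right (by linarith), max_eq_left (by linarith)]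
  field_simp
  ring

lemma ydiv_val0_last {n : ℕ} (hn : 2 < n) (i : Fin n) (hi0 : i.val = 0) (j : Fin n)
    (hj1 : j.val = n-1) :
    cakeM n i ((ydiv n hn).pieces j) = ENNReal.ofReal (1/2) := by
  have h0 := nR_pos hn
  have he := eps_pos hn
  have h2e := eps_lt_invn hn
  rw [ydiv_piece_last hn j hj1, cakeM_w_Ioo hn i (by omega), hi0, ctr_zero]
  congr 1
  rw [min_eq_left (by linarith), max_eq_right (by linarith)]
  field_simp
  ring

lemma ydiv_val0_mid {n : ℕ} (hn : 2 < n) (i : Fin n) (hi0 : i.val = 0) (j : Fin n)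
    (hj1 : j.val ≠ n-1) (hj0 : j.val ≠ 0) :
    cakeM n i ((ydiv n hn).pieces j) = 0 := by
  have h0 := nR_pos hn
  have he := eps_pos hn
  have hes := eps_small hn
  have h3 := nR3 hn
  have h3e : 3 * epsn n ≤ 1/(n:ℝ) := by nlinarith
  have hq := q_pos hn
  have hj1R : (1:ℝ) ≤ (j.val:ℝ) := by exact_mod_cast Nat.one_le_iff_ne_zero.mpr hj0
  rw [ydiv_piece_mid hn j hj1 hj0, cakeM_w_Ioo hn i (by omega), hi0, ctr_zero]
  rw [ENNReal.ofReal_eq_zero]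
  apply div_nonpos_of_nonpos_of_nonneg ?_ (by linarith)
  have h1 : min (((j.val:ℝ)+2)*(1/(n:ℝ)-epsn n)) (1/(n:ℝ) + epsn n) ≤ 1/(n:ℝ) + epsn n :=
    min_le_right _ _
  have h2 : ((j.val:ℝ)+1)*(1/(n:ℝ)-epsn n) ≤ max (((j.val:ℝ)+1)*(1/(n:ℝ)-epsn n)) (1/(n:ℝ) - epsn n) :=
    le_max_left _ _
  have h3' : 1/(n:ℝ) + epsn n ≤ ((j.val:ℝ)+1)*(1/(n:ℝ)-epsn n) := by
    nlinarith [mul_nonneg (by linarith : (0:ℝ) ≤ (j.val:ℝ) - 1) hq.le]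
  linarith

lemma ylen_le {n : ℕ} (hn : 2 < n) (j : Fin n) : yrep n j - ylep n j ≤ 1/(n:ℝ) := by
  have h0 := nR_pos hn
  have he := eps_pos hn
  have hd : (2:ℝ)/(n:ℝ) = 2 * (1/(n:ℝ)) := by ring
  by_cases hj1 : j.val = n-1
  · simp [ylep, yrep, hj1]
  · by_cases hj0 : j.val = 0
    · have h01 : ¬((0:ℕ) = n-1) := by omega
      simp only [ylep, yrep, hj1, hj0, h01, if_false, if_true]
      linarith
    · simp only [ylep, yrep, hj1, hj0, if_false]
      have : ((j.val:ℝ)+2)*(1/(n:ℝ)-epsn n) - ((j.val:ℝ)+1)*(1/(n:ℝ)-epsn n)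
          = 1/(n:ℝ) - epsn n := by ring
      linarith

lemma ydiv_last_own {n : ℕ} (hn : 2 < n) (i : Fin n) (hi1 : i.val = n-1) :
    cakeM n i ((ydiv n hn).pieces i) = ENNReal.ofReal (1/(n:ℝ)) := by
  have h0 := nR_pos hn
  have h3 := nR3 hn
  rw [ydiv_piece_last hn i hi1, cakeM_L_Ioo i hi1]
  congr 1
  rw [min_eq_left (by rw [div_le_one h0]; linarith), max_self]
  ring

lemma ydiv_last_le {n : ℕ} (hn : 2 < n) (i : Fin n) (hi1 : i.val = n-1) (j : Fin n) :
    cakeM n i ((ydiv n hn).pieces j) ≤ ENNReal.ofReal (1/(n:ℝ)) := by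
  have hll := ylen_le hn j
  have : (ydiv n hn).pieces j = Set.Ioo (ylep n j) (yrep n j) := rfl
  rw [this, cakeM_L_Ioo i hi1]
  apply ENNReal.ofReal_le_ofReal
  have h1 := min_le_left (yrep n j) 1
  have h2 := le_max_left (ylep n j) 0
  linarith

lemma ydiv_ef {n : ℕ} (hn : 2 < n) : EnvyFree (cakeM n) (ydiv n hn) := by
  intro i j
  by_cases hi1 : i.val = n-1
  · rw [ydiv_last_own hn i hi1]
    exact ydiv_last_le hn i hi1 j
  · by_cases hi0 : i.val = 0
    · rw [ydiv_val0_own hn i hi0]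
      by_cases hj1 : j.val = n-1
      · rw [ydiv_val0_last hn i hi0 j hj1]
      · by_cases hj0 : j.val = 0
        · have : j = i := Fin.ext (hj0.trans hi0.symm)
          rw [this, ydiv_val0_own hn i hi0]
        · rw [ydiv_val0_mid hn i hi0 j hj1 hj0]
          exact zero_le
    · rw [ydiv_val_mid hn i hi1 hi0]
      exact cakeM_le_one hn i _

lemma yrep_lt_one {n : ℕ} (hn : 2 < n) (i : Fin n) : yrep n i < 1 := by
  have h0 := nR_pos hn
  have he := eps_pos hn
  have h3 := nR3 hn
  have hd : (2:ℝ)/(n:ℝ) = 2 * (1/(n:ℝ)) := by ring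
  have hinv : 1/(n:ℝ) ≤ 1/3 := by
    rw [div_le_div_iff₀ h0 (by norm_num)]; linarith
  by_cases hi1 : i.val = n-1
  · simp only [yrep, hi1, if_true, eq_self_iff_true, if_pos] ; linarith
  · by_cases hi0 : i.val = 0
    · have h01 : ¬((0:ℕ) = n-1) := by omega
      simp only [yrep, hi1, hi0, h01, if_false, if_true]
      linarith
    · simp only [yrep, hi1, hi0, if_false]
      have hkR : (i.val:ℝ) ≤ (n:ℝ) - 2 := cast_sub2 hn (fin_ne_last i hi1)
      have hq := q_pos hn
      have h1 : ((i.val:ℝ)+2)*(1/(n:ℝ)-epsn n) ≤ (n:ℝ)*(1/(n:ℝ)-epsn n) := by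
        nlinarith
      have h2 : (n:ℝ)*(1/(n:ℝ)-epsn n) = 1 - (n:ℝ)*epsn n := by field_simp
      nlinarith

lemma ydiv_not_complete {n : ℕ} (hn : 2 < n) : ¬ (ydiv n hn).Complete := by
  intro h
  have h1 : (1:ℝ) ∈ Set.Icc (0:ℝ) 1 := by norm_num
  rcases Set.mem_iUnion.mp (h h1) with ⟨i, hi⟩
  have hsub : closure ((ydiv n hn).pieces i) ⊆ Set.Icc (ylep n i) (yrep n i) :=
    closure_minimal Set.Ioo_subset_Icc_self isClosed_Icc
  have h2 : (1:ℝ) ≤ yrep n i := (hsub hi).2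
  exact absurd h2 (not_le.mpr (yrep_lt_one hn i))

lemma Icc_sub_Ioo_endpoints (a b : ℝ) : Set.Icc a b ⊆ Set.Ioo a b ∪ {a} ∪ {b} := by
  intro t ht
  rcases eq_or_lt_of_le ht.1 with h|h
  · exact Or.inl (Or.inr (Set.mem_singleton_iff.mpr h.symm))
  · rcases eq_or_lt_of_le ht.2 with h2|h2
    · exact Or.inr (Set.mem_singleton_iff.mpr h2)
    · exact Or.inl (Or.inl ⟨h, h2⟩)

lemma meas_closure_Ioo (μ : Measure ℝ) (hμ : ∀ t : ℝ, μ {t} = 0) (a b : ℝ) :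
    μ (closure (Set.Ioo a b)) ≤ μ (Set.Ioo a b) := by
  rcases lt_or_ge a b with h|h
  · rw [closure_Ioo h.ne]
    calc μ (Set.Icc a b) ≤ μ (Set.Ioo a b ∪ {a} ∪ {b}) :=
          measure_mono (Icc_sub_Ioo_endpoints a b)
    _ ≤ μ (Set.Ioo a b ∪ {a}) + μ {b} := measure_union_le _ _
    _ ≤ μ (Set.Ioo a b) + μ {a} + μ {b} := by
        gcongr
        exact measure_union_le _ _
    _ = μ (Set.Ioo a b) := by rw [hμ a, hμ b]; ring
  · rw [Set.Ioo_eq_empty (not_lt.mpr h), closure_empty]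

section Analysis

variable {n : ℕ} (hn : 2 < n) (x : ConnDiv n) (hc : x.Complete)
  (hef : EnvyFree (cakeM n) x) (A B : Fin n → ℝ)
  (hAB : ∀ i, x.pieces i = Set.Ioo (A i) (B i))

include hn hc hef hAB

lemma an1 : ∀ j, 1 ≤ (n:ℝ≥0∞) * cakeM n j (x.pieces j) := by
  intro j
  have step1 : (1:ℝ≥0∞) ≤ ∑ i, cakeM n j (closure (x.pieces i)) := by
    calc (1:ℝ≥0∞) = cakeM n j (Set.Icc 0 1) := (cakeM_Icc hn j).symm
    _ ≤ cakeM n j (⋃ i, closure (x.pieces i)) := measure_mono hc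
    _ ≤ ∑ i, cakeM n j (closure (x.pieces i)) := by
        refine le_trans (measure_iUnion_le _) ?_
        rw [tsum_fintype]
  have step2 : ∀ i, cakeM n j (closure (x.pieces i)) ≤ cakeM n j (x.pieces j) := by
    intro i
    calc cakeM n j (closure (x.pieces i)) ≤ cakeM n j (x.pieces i) := by
          rw [hAB i]
          exact meas_closure_Ioo _ (cakeM_singleton j) _ _
    _ ≤ cakeM n j (x.pieces j) := hef j i
  calc (1:ℝ≥0∞) ≤ ∑ i, cakeM n j (closure (x.pieces i)) := step1
  _ ≤ ∑ _i : Fin n, cakeM n j (x.pieces j) := Finset.sum_le_sum (fun i _ => step2 i)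
  _ = (n:ℝ≥0∞) * cakeM n j (x.pieces j) := by
      rw [Finset.sum_const, Finset.card_univ, Fintype.card_fin, nsmul_eq_mul]

lemma an2 : ∀ j, A j < B j := by
  intro j
  by_contra h
  push_neg at h
  have h1 := an1 hn x hc hef A B hAB j
  rw [hAB j, Set.Ioo_eq_empty (not_lt.mpr h)] at h1
  simp at h1

lemma an3 : ∀ j, 0 ≤ A j ∧ B j ≤ 1 := by
  intro j
  have h1 := x.subset j
  rw [hAB j] at h1
  exact Ioo_sub_Icc (an2 hn x hc hef A B hAB j) h1

lemma an1R {j : Fin n} {r : ℝ} (hv : cakeM n j (x.pieces j) = ENNReal.ofReal r) :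
    1 ≤ (n:ℝ) * r := by
  have h1 := an1 hn x hc hef A B hAB j
  rw [hv, ← ENNReal.ofReal_natCast n, ← ENNReal.ofReal_mul (Nat.cast_nonneg n)] at h1
  exact ENNReal.one_le_ofReal.mp h1

lemma an4 {i : Fin n} (hi : i.val ≠ n-1) :
    2 * epsn n ≤ (n:ℝ) * (min (B i) (ctr n i.val + epsn n)
      - max (A i) (ctr n i.val - epsn n)) := by
  have h0 := nR_pos hn
  have he := eps_pos hn
  have hv : cakeM n i (x.pieces i) = ENNReal.ofReal ((min (B i) (ctr n i.val + epsn n)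
      - max (A i) (ctr n i.val - epsn n))/(2*epsn n)) := by
    rw [hAB i]; exact cakeM_w_Ioo hn i hi _ _
  have h1 := an1R hn x hc hef A B hAB hv
  have h2 : 0 < 2 * epsn n := by linarith
  calc 2*epsn n = 1 * (2*epsn n) := by ring
  _ ≤ ((n:ℝ) * ((min (B i) (ctr n i.val + epsn n) - max (A i) (ctr n i.val - epsn n))/(2*epsn n)))
        * (2*epsn n) := by
      apply mul_le_mul_of_nonneg_right h1 h2.le
  _ = (n:ℝ) * (min (B i) (ctr n i.val + epsn n) - max (A i) (ctr n i.val - epsn n)) := by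
      field_simp

lemma an4' {i : Fin n} (hi : i.val ≠ n-1) :
    ctr n i.val - epsn n < B i ∧ A i < ctr n i.val + epsn n ∧
    0 < min (B i) (ctr n i.val + epsn n) - max (A i) (ctr n i.val - epsn n) := by
  have h0 := nR_pos hn
  have he := eps_pos hn
  have h4 := an4 hn x hc hef A B hAB hi
  have hD : 0 < min (B i) (ctr n i.val + epsn n) - max (A i) (ctr n i.val - epsn n) := by
    nlinarith
  refine ⟨?_, ?_, hD⟩
  · have := min_le_left (B i) (ctr n i.val + epsn n)
    have := le_max_right (A i) (ctr n i.val - epsn n)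
    linarith
  · have := min_le_right (B i) (ctr n i.val + epsn n)
    have := le_max_left (A i) (ctr n i.val - epsn n)
    linarith

lemma an_len {j : Fin n} (hj : j.val = n-1) :
    cakeM n j (x.pieces j) = ENNReal.ofReal (B j - A j) := by
  rw [hAB j, cakeM_L_Ioo j hj]
  congr 1
  rw [min_eq_left (an3 hn x hc hef A B hAB j).2, max_eq_left (an3 hn x hc hef A B hAB j).1]

omit hn hc hef hAB in
lemma closure_Ioo_sub (a b : ℝ) : closure (Set.Ioo a b) ⊆ Set.Ioo a b ∪ {a} ∪ {b} := by
  rcases lt_or_ge a b with h|h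
  · rw [closure_Ioo h.ne]
    exact Icc_sub_Ioo_endpoints a b
  · rw [Set.Ioo_eq_empty (not_lt.mpr h), closure_empty]
    exact Set.empty_subset _

lemma an_trap {i j : Fin n} (hi : i.val ≠ n-1) (hji : j ≠ i)
    (h1 : ctr n i.val - epsn n < A j) (h2 : B j < ctr n i.val + epsn n) : False := by
  have h0 := nR_pos hn
  have he := eps_pos hn
  have h2e := eps_lt_invn hn
  by_cases hj1 : j.val = n-1
  · have hv := an_len hn x hc hef A B hAB hj1
    have hge := an1R hn x hc hef A B hAB hv
    have hlen : B j - A j < 2 * epsn n := by linarith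
    have hmul : (n:ℝ) * (2*epsn n) < (n:ℝ) * (1/(n:ℝ)) := by
      apply mul_lt_mul_of_pos_left h2e h0
    have hn1 : (n:ℝ) * (1/(n:ℝ)) = 1 := by field_simp
    nlinarith
  · obtain ⟨hBj, hAj, hD⟩ := an4' hn x hc hef A B hAB hj1
    have hmm : max (A j) (ctr n j.val - epsn n) < min (B j) (ctr n j.val + epsn n) := by
      linarith
    have hml := min_le_left (B j) (ctr n j.val + epsn n)
    have hmr := min_le_right (B j) (ctr n j.val + epsn n)
    have hxl := le_max_left (A j) (ctr n j.val - epsn n)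
    have hxr := le_max_right (A j) (ctr n j.val - epsn n)
    have hover1 : ctr n i.val - epsn n < ctr n j.val + epsn n := by linarith
    have hover2 : ctr n j.val - epsn n < ctr n i.val + epsn n := by linarith
    have hij : i.val ≠ j.val := fun h => hji (Fin.ext h.symm)
    have hctr : ctr n j.val - ctr n i.val = ((j.val:ℝ) - i.val)/(n:ℝ) := by
      unfold ctr; ring
    rcases Nat.lt_or_ge i.val j.val with h|h
    · have hcast : (1:ℝ) ≤ (j.val:ℝ) - i.val := by
        have : (i.val:ℝ) + 1 ≤ j.val := by exact_mod_cast h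
        linarith
      have : 1/(n:ℝ) ≤ ((j.val:ℝ) - i.val)/(n:ℝ) := by
        rw [div_le_div_iff_of_pos_right h0]; linarith
      linarith
    · have hlt : j.val < i.val := by omega
      have hcast : (1:ℝ) ≤ (i.val:ℝ) - j.val := by
        have : (j.val:ℝ) + 1 ≤ i.val := by exact_mod_cast hlt
        linarith
      have : 1/(n:ℝ) ≤ ((i.val:ℝ) - j.val)/(n:ℝ) := by
        rw [div_le_div_iff_of_pos_right h0]; linarith
      have hctr2 : ctr n i.val - ctr n j.val = ((i.val:ℝ) - j.val)/(n:ℝ) := by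
        unfold ctr; ring
      linarith

lemma an_piece_zero {i j : Fin n} {R : Set ℝ}
    (hempty : x.pieces j ∩ R = ∅) : cakeM n i (closure (x.pieces j) ∩ R) = 0 := by
  have hsub : closure (x.pieces j) ∩ R ⊆ {A j} ∪ {B j} := by
    rintro t ⟨ht1, ht2⟩
    rw [hAB j] at ht1
    rcases closure_Ioo_sub (A j) (B j) ht1 with h|h
    · rcases h with h|h
      · exfalso
        have : t ∈ x.pieces j ∩ R := ⟨by rw [hAB j]; exact h, ht2⟩
        rw [hempty] at this
        exact this
      · exact Or.inl h
    · exact Or.inr h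
  refine le_antisymm (le_trans (measure_mono hsub) ?_) zero_le
  refine le_trans (measure_union_le _ _) ?_
  simp [cakeM_singleton]

lemma an_R_le {i : Fin n} {R : Set ℝ} (hR : R ⊆ Set.Icc 0 1)
    (hkey : ∀ j k : Fin n, (x.pieces j ∩ R).Nonempty → (x.pieces k ∩ R).Nonempty → j = k) :
    cakeM n i R ≤ cakeM n i (x.pieces i) := by
  have hstep : cakeM n i R ≤ ∑ j, cakeM n i (closure (x.pieces j) ∩ R) := by
    calc cakeM n i R ≤ cakeM n i (⋃ j, closure (x.pieces j) ∩ R) := by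
          apply measure_mono
          intro t ht
          rcases Set.mem_iUnion.mp (hc (hR ht)) with ⟨j, hj⟩
          exact Set.mem_iUnion.mpr ⟨j, hj, ht⟩
    _ ≤ ∑ j, cakeM n i (closure (x.pieces j) ∩ R) := by
          refine le_trans (measure_iUnion_le _) ?_
          rw [tsum_fintype]
  by_cases hS : ∃ j0 : Fin n, (x.pieces j0 ∩ R).Nonempty
  · obtain ⟨j0, hj0⟩ := hS
    have hsum : ∑ j, cakeM n i (closure (x.pieces j) ∩ R)
        = cakeM n i (closure (x.pieces j0) ∩ R) := by
      refine Finset.sum_eq_single_of_mem j0 (Finset.mem_univ _) (fun b _ hb => ?_)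
      refine an_piece_zero hn x hc hef A B hAB ?_
      rw [Set.eq_empty_iff_forall_notMem]
      intro t ht
      exact hb (hkey b j0 ⟨t, ht⟩ hj0)
    calc cakeM n i R ≤ cakeM n i (closure (x.pieces j0) ∩ R) := by rw [← hsum]; exact hstep
    _ ≤ cakeM n i (closure (x.pieces j0)) := measure_mono Set.inter_subset_left
    _ ≤ cakeM n i (x.pieces j0) := by
        rw [hAB j0]; exact meas_closure_Ioo _ (cakeM_singleton i) _ _
    _ ≤ cakeM n i (x.pieces i) := hef i j0
  · push_neg at hS
    have hsum : ∑ j, cakeM n i (closure (x.pieces j) ∩ R) = 0 := by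
      refine Finset.sum_eq_zero (fun b _ => ?_)
      refine an_piece_zero hn x hc hef A B hAB ?_
      exact hS b
    rw [hsum] at hstep
    exact le_trans hstep zero_le

lemma an5R {i : Fin n} (hi : i.val ≠ n-1) : ctr n i.val ≤ B i := by
  have h0 := nR_pos hn
  have he := eps_pos hn
  have h2e := eps_lt_invn hn
  by_contra hlt
  push_neg at hlt
  obtain ⟨hwB, hwA, hwD⟩ := an4' hn x hc hef A B hAB hi
  have hne := an2 hn x hc hef A B hAB
  have hbd := an3 hn x hc hef A B hAB
  have hc1 : ctr n i.val + epsn n ≤ 1 := by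
    have := ctr_ub hn i.val (fin_ne_last i hi)
    linarith
  have hRIcc : Set.Ioo (B i) (ctr n i.val + epsn n) ⊆ Set.Icc (0:ℝ) 1 := by
    intro t ht
    exact ⟨by linarith [(hbd i).1, hne i, ht.1], by linarith [ht.2]⟩
  have hleft : ∀ j : Fin n,
      (x.pieces j ∩ Set.Ioo (B i) (ctr n i.val + epsn n)).Nonempty → j ≠ i → B i ≤ A j := by
    intro j hj hji
    obtain ⟨t, htj, htR⟩ := hj
    rw [hAB j] at htj
    by_contra h
    push_neg at h
    have hdisj : Disjoint (x.pieces j) (x.pieces i) := x.disj hji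
    have hmem1 : (max (A j) (A i) + B i)/2 ∈ x.pieces j := ?_
    have hmem2 : (max (A j) (A i) + B i)/2 ∈ x.pieces i := ?_
    exact Set.disjoint_left.mp hdisj hmem1 hmem2
    · rw [hAB i]
      constructor
      · have := le_max_right (A j) (A i)
        have hmlt : max (A j) (A i) < B i := max_lt h (hne i)
        linarith
      · have hmlt : max (A j) (A i) < B i := max_lt h (hne i)
        linarith
    · rw [hAB j]
      constructor
      · have := le_max_left (A j) (A i)
        have hmlt : max (A j) (A i) < B i := max_lt h (hne i)
        linarith
      · have hmlt : max (A j) (A i) < B i := max_lt h (hne i)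
        have hBj : B i < B j := lt_trans htR.1 htj.2
        linarith
  have hkey : ∀ j k : Fin n,
      (x.pieces j ∩ Set.Ioo (B i) (ctr n i.val + epsn n)).Nonempty →
      (x.pieces k ∩ Set.Ioo (B i) (ctr n i.val + epsn n)).Nonempty → j = k := by
    intro j k hj hk
    by_contra hjk
    have hji : j ≠ i := by
      rintro rfl
      obtain ⟨t, ht1, ht2⟩ := hj
      rw [hAB] at ht1
      exact absurd ht1.2 (not_lt.mpr ht2.1.le)
    have hki : k ≠ i := by
      rintro rfl
      obtain ⟨t, ht1, ht2⟩ := hk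
      rw [hAB] at ht1
      exact absurd ht1.2 (not_lt.mpr ht2.1.le)
    have hAj := hleft j hj hji
    have hAk := hleft k hk hki
    obtain ⟨t, htj, htR⟩ := hj
    obtain ⟨s, hsk, hsR⟩ := hk
    rw [hAB] at htj
    rw [hAB] at hsk
    have hd2 : Disjoint (Set.Ioo (A j) (B j)) (Set.Ioo (A k) (B k)) := by
      have hd3 : Disjoint (x.pieces j) (x.pieces k) := x.disj hjk
      rwa [hAB j, hAB k] at hd3
    rcases disjoint_Ioo_cases hd2 (hne j) (hne k) with hor|hor
    · exact an_trap hn x hc hef A B hAB hi hji (by linarith) (by linarith [hsk.1, hsR.2])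
    · exact an_trap hn x hc hef A B hAB hi hki (by linarith) (by linarith [htj.1, htR.2])
  have hvR := an_R_le hn x hc hef A B hAB (i := i) hRIcc hkey
  have hval1 : cakeM n i (Set.Ioo (B i) (ctr n i.val + epsn n))
      = ENNReal.ofReal ((ctr n i.val + epsn n - B i)/(2*epsn n)) := by
    rw [cakeM_w_Ioo hn i hi, min_self, max_eq_left hwB.le]
  have hval2 : cakeM n i (x.pieces i) = ENNReal.ofReal ((min (B i) (ctr n i.val + epsn n)
      - max (A i) (ctr n i.val - epsn n))/(2*epsn n)) := by
    rw [hAB i]; exact cakeM_w_Ioo hn i hi _ _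
  rw [hval1, hval2] at hvR
  have hreal := (ENNReal.ofReal_le_ofReal_iff (by positivity)).mp hvR
  rw [div_le_div_iff_of_pos_right (by linarith : (0:ℝ) < 2*epsn n)] at hreal
  have h5 := min_le_left (B i) (ctr n i.val + epsn n)
  have h6 := le_max_right (A i) (ctr n i.val - epsn n)
  linarith

lemma an5L {i : Fin n} (hi : i.val ≠ n-1) : A i ≤ ctr n i.val := by
  have h0 := nR_pos hn
  have he := eps_pos hn
  have h2e := eps_lt_invn hn
  by_contra hlt
  push_neg at hlt
  obtain ⟨hwB, hwA, hwD⟩ := an4' hn x hc hef A B hAB hi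
  have hne := an2 hn x hc hef A B hAB
  have hbd := an3 hn x hc hef A B hAB
  have hc0 : 0 ≤ ctr n i.val - epsn n := by
    have := ctr_lb hn i.val
    linarith
  have hRIcc : Set.Ioo (ctr n i.val - epsn n) (A i) ⊆ Set.Icc (0:ℝ) 1 := by
    intro t ht
    exact ⟨by linarith [ht.1], by linarith [ht.2, hne i, (hbd i).2]⟩
  have hright : ∀ j : Fin n,
      (x.pieces j ∩ Set.Ioo (ctr n i.val - epsn n) (A i)).Nonempty → j ≠ i → B j ≤ A i := by
    intro j hj hji
    obtain ⟨t, htj, htR⟩ := hj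
    rw [hAB j] at htj
    by_contra h
    push_neg at h
    have hdisj : Disjoint (x.pieces j) (x.pieces i) := x.disj hji
    have hmin : A i < min (B j) (B i) := lt_min h (hne i)
    have hmem1 : (A i + min (B j) (B i))/2 ∈ x.pieces j := by
      rw [hAB j]
      constructor
      · have : A j < A i := lt_trans htj.1 htR.2
        linarith
      · have := min_le_left (B j) (B i)
        linarith
    have hmem2 : (A i + min (B j) (B i))/2 ∈ x.pieces i := by
      rw [hAB i]
      constructor
      · linarith
      · have := min_le_right (B j) (B i)
        linarith
    exact Set.disjoint_left.mp hdisj hmem1 hmem2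
  have hkey : ∀ j k : Fin n,
      (x.pieces j ∩ Set.Ioo (ctr n i.val - epsn n) (A i)).Nonempty →
      (x.pieces k ∩ Set.Ioo (ctr n i.val - epsn n) (A i)).Nonempty → j = k := by
    intro j k hj hk
    by_contra hjk
    have hji : j ≠ i := by
      rintro rfl
      obtain ⟨t, ht1, ht2⟩ := hj
      rw [hAB] at ht1
      exact absurd ht1.1 (not_lt.mpr ht2.2.le)
    have hki : k ≠ i := by
      rintro rfl
      obtain ⟨t, ht1, ht2⟩ := hk
      rw [hAB] at ht1
      exact absurd ht1.1 (not_lt.mpr ht2.2.le)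
    have hBj := hright j hj hji
    have hBk := hright k hk hki
    obtain ⟨t, htj, htR⟩ := hj
    obtain ⟨s, hsk, hsR⟩ := hk
    rw [hAB] at htj
    rw [hAB] at hsk
    have hd2 : Disjoint (Set.Ioo (A j) (B j)) (Set.Ioo (A k) (B k)) := by
      have hd3 : Disjoint (x.pieces j) (x.pieces k) := x.disj hjk
      rwa [hAB j, hAB k] at hd3
    rcases disjoint_Ioo_cases hd2 (hne j) (hne k) with hor|hor
    · exact an_trap hn x hc hef A B hAB hi hki (by linarith [htj.2, htR.1]) (by linarith)
    · exact an_trap hn x hc hef A B hAB hi hji (by linarith [hsk.2, hsR.1]) (by linarith)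
  have hvR := an_R_le hn x hc hef A B hAB (i := i) hRIcc hkey
  have hval1 : cakeM n i (Set.Ioo (ctr n i.val - epsn n) (A i))
      = ENNReal.ofReal ((A i - (ctr n i.val - epsn n))/(2*epsn n)) := by
    rw [cakeM_w_Ioo hn i hi, min_eq_left hwA.le, max_self]
  have hval2 : cakeM n i (x.pieces i) = ENNReal.ofReal ((min (B i) (ctr n i.val + epsn n)
      - max (A i) (ctr n i.val - epsn n))/(2*epsn n)) := by
    rw [hAB i]; exact cakeM_w_Ioo hn i hi _ _
  rw [hval1, hval2] at hvR
  have hreal := (ENNReal.ofReal_le_ofReal_iff (by positivity)).mp hvR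
  rw [div_le_div_iff_of_pos_right (by linarith : (0:ℝ) < 2*epsn n)] at hreal
  have h5 := min_le_right (B i) (ctr n i.val + epsn n)
  have h6 := le_max_left (A i) (ctr n i.val - epsn n)
  linarith

lemma an6 {j l : Fin n} (hl : l.val = n-1) : B j - A j ≤ B l - A l := by
  have h1 := hef l j
  rw [an_len hn x hc hef A B hAB hl] at h1
  rw [hAB j, cakeM_L_Ioo l hl] at h1
  have h2 := (ENNReal.ofReal_le_ofReal_iff (by linarith [an2 hn x hc hef A B hAB l])).mp h1
  have h3 := min_le_left (B j) (1:ℝ)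
  have h4 := le_max_left (A j) (0:ℝ)
  have hbd := an3 hn x hc hef A B hAB j
  rw [min_eq_left hbd.2, max_eq_left hbd.1] at h2
  linarith

lemma an7 : 1 ≤ ∑ j, (B j - A j) := by
  have hne := an2 hn x hc hef A B hAB
  have h1 : (1:ℝ≥0∞) ≤ ∑ j, volume (closure (x.pieces j)) := by
    calc (1:ℝ≥0∞) = volume (Set.Icc (0:ℝ) 1) := by rw [Real.volume_Icc]; norm_num
    _ ≤ volume (⋃ j, closure (x.pieces j)) := measure_mono hc
    _ ≤ ∑ j, volume (closure (x.pieces j)) := by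
        refine le_trans (measure_iUnion_le _) ?_
        rw [tsum_fintype]
  have h2 : ∀ j, volume (closure (x.pieces j)) = ENNReal.ofReal (B j - A j) := by
    intro j
    rw [hAB j, closure_Ioo (hne j).ne, Real.volume_Icc]
  rw [Finset.sum_congr rfl (fun j _ => h2 j),
    ← ENNReal.ofReal_sum_of_nonneg (fun j _ => by linarith [hne j])] at h1
  exact ENNReal.one_le_ofReal.mp h1

lemma an8 {l : Fin n} (hl : l.val = n-1) : B l - A l ≤ 1/(n:ℝ) := by
  have h0 := nR_pos hn
  have hne := an2 hn x hc hef A B hAB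
  have hbd := an3 hn x hc hef A B hAB
  by_contra hgt
  push_neg at hgt
  set j : ℕ := ⌊A l * n⌋₊ + 1 with hj
  have hj1 : A l < (j:ℝ)/(n:ℝ) := by
    rw [lt_div_iff₀ h0]
    rw [hj]
    push_cast
    exact Nat.lt_floor_add_one _
  have hj2 : (j:ℝ)/(n:ℝ) ≤ A l + 1/(n:ℝ) := by
    rw [div_le_iff₀ h0]
    rw [hj]
    push_cast
    have h3 : (⌊A l * n⌋₊ : ℝ) ≤ A l * n := Nat.floor_le (mul_nonneg (hbd l).1 h0.le)
    have h4 : (A l + 1/(n:ℝ)) * n = A l * n + 1 := by field_simp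
    linarith
  have hjlt : (j:ℝ)/(n:ℝ) < B l := by linarith
  have hjn : j < n := by
    have hr : (j:ℝ)/(n:ℝ) < 1 := by linarith [(hbd l).2]
    rw [div_lt_one h0] at hr
    exact_mod_cast hr
  have hj0 : 1 ≤ j := by omega
  set k' : Fin n := ⟨j-1, by omega⟩ with hk'
  have hk'v : k'.val = j - 1 := rfl
  have hk'ne : k'.val ≠ n-1 := by
    rw [hk'v]; omega
  have hctr : ctr n k'.val = (j:ℝ)/(n:ℝ) := by
    rw [hk'v]
    unfold ctr
    congr 1
    push_cast [Nat.cast_sub hj0]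
    ring
  have hkl : k' ≠ l := by
    intro hE
    have := congrArg Fin.val hE
    rw [hk'v, hl] at this
    omega
  have hd2 : Disjoint (Set.Ioo (A k') (B k')) (Set.Ioo (A l) (B l)) := by
    have hd3 : Disjoint (x.pieces k') (x.pieces l) := x.disj hkl
    rwa [hAB k', hAB l] at hd3
  rcases disjoint_Ioo_cases hd2 (hne k') (hne l) with hor|hor
  · have h5 := an5R hn x hc hef A B hAB hk'ne
    rw [hctr] at h5
    linarith
  · have h5 := an5L hn x hc hef A B hAB hk'ne
    rw [hctr] at h5
    linarith

lemma an9 : ∀ j, B j - A j = 1/(n:ℝ) := by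
  intro j
  have h0 := nR_pos hn
  have hl : (⟨n-1, by omega⟩ : Fin n).val = n-1 := rfl
  have hle : ∀ k : Fin n, B k - A k ≤ 1/(n:ℝ) := fun k =>
    le_trans (an6 hn x hc hef A B hAB hl) (an8 hn x hc hef A B hAB hl)
  by_contra hne'
  have hsum := an7 hn x hc hef A B hAB
  have hstrict : ∑ k, (B k - A k) < ∑ _k : Fin n, 1/(n:ℝ) :=
    Finset.sum_lt_sum (fun k _ => hle k) ⟨j, Finset.mem_univ j, lt_of_le_of_ne (hle j) hne'⟩
  have hconst : ∑ _k : Fin n, 1/(n:ℝ) = 1 := by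
    rw [Finset.sum_const, Finset.card_univ, Fintype.card_fin, nsmul_eq_mul]
    field_simp
  linarith

lemma an10 {k : Fin n} (hk : k.val ≠ n-1) :
    A k = (k.val:ℝ)/(n:ℝ) ∨ A k = ((k.val:ℝ)+1)/(n:ℝ) := by
  classical
  have h0 := nR_pos hn
  have hne := an2 hn x hc hef A B hAB
  have hbd := an3 hn x hc hef A B hAB
  have hlen := an9 hn x hc hef A B hAB
  set L : Finset (Fin n) := Finset.univ.filter (fun j => B j ≤ A k) with hL
  set Rt : Finset (Fin n) := Finset.univ.filter (fun j => B k ≤ A j) with hRt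
  have volbound : ∀ (S : Finset (Fin n)) (u v : ℝ), 0 ≤ v - u →
      (∀ j ∈ S, x.pieces j ⊆ Set.Icc u v) → (S.card : ℝ) * (1/(n:ℝ)) ≤ v - u := by
    intro S u v huv hsub
    have hdisj : (S : Set (Fin n)).PairwiseDisjoint x.pieces := fun a _ b _ hab => x.disj hab
    have hmeas : ∀ j ∈ S, MeasurableSet (x.pieces j) := fun j _ => by
      rw [hAB j]; exact measurableSet_Ioo
    have h1 : volume (⋃ j ∈ S, x.pieces j) = ∑ j ∈ S, volume (x.pieces j) :=
      measure_biUnion_finset hdisj hmeas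
    have h2 : ∑ j ∈ S, volume (x.pieces j) = ENNReal.ofReal ((S.card : ℝ) * (1/(n:ℝ))) := by
      have he : ∀ j ∈ S, volume (x.pieces j) = ENNReal.ofReal (1/(n:ℝ)) := by
        intro j _
        rw [hAB j, Real.volume_Ioo]
        congr 1
        linarith [hlen j]
      rw [Finset.sum_congr rfl he, Finset.sum_const, nsmul_eq_mul,
        ← ENNReal.ofReal_natCast S.card, ← ENNReal.ofReal_mul (Nat.cast_nonneg _)]
    have h3 : volume (⋃ j ∈ S, x.pieces j) ≤ ENNReal.ofReal (v - u) := by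
      refine le_trans (measure_mono (Set.iUnion₂_subset hsub)) ?_
      rw [Real.volume_Icc]
    rw [h1, h2] at h3
    exact (ENNReal.ofReal_le_ofReal_iff huv).mp h3
  have e1 : (L.card : ℝ) * (1/(n:ℝ)) ≤ A k - 0 := by
    refine volbound L 0 (A k) (by linarith [(hbd k).1]) ?_
    intro j hj t ht
    rw [hAB j] at ht
    have hjL : B j ≤ A k := (Finset.mem_filter.mp hj).2
    exact ⟨by linarith [(hbd j).1, ht.1], by linarith [ht.2]⟩
  have e2 : (Rt.card : ℝ) * (1/(n:ℝ)) ≤ 1 - B k := by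
    refine volbound Rt (B k) 1 (by linarith [(hbd k).2]) ?_
    intro j hj t ht
    rw [hAB j] at ht
    have hjR : B k ≤ A j := (Finset.mem_filter.mp hj).2
    exact ⟨by linarith [ht.1], by linarith [ht.2, (hbd j).2]⟩
  have hdisjLR : Disjoint L Rt := by
    rw [Finset.disjoint_left]
    intro j hjL hjR
    have h1 : B j ≤ A k := (Finset.mem_filter.mp hjL).2
    have h2 : B k ≤ A j := (Finset.mem_filter.mp hjR).2
    linarith [hne j, hne k]
  have hU : L ∪ Rt = Finset.univ.erase k := by
    ext j
    simp only [hL, hRt, Finset.mem_union, Finset.mem_filter, Finset.mem_univ, true_and,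
      Finset.mem_erase, and_true]
    constructor
    · rintro (h|h) hE <;> rw [hE] at h <;> linarith [hne k]
    · intro hjk
      have hd2 : Disjoint (Set.Ioo (A j) (B j)) (Set.Ioo (A k) (B k)) := by
        have hd3 : Disjoint (x.pieces j) (x.pieces k) := x.disj hjk
        rwa [hAB j, hAB k] at hd3
      exact disjoint_Ioo_cases hd2 (hne j) (hne k)
  have hcard : (L.card : ℝ) + Rt.card = (n:ℝ) - 1 := by
    have h1 : L.card + Rt.card = n - 1 := by
      rw [← Finset.card_union_of_disjoint hdisjLR, hU,
        Finset.card_erase_of_mem (Finset.mem_univ k), Finset.card_univ, Fintype.card_fin]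
    have h2 : ((L.card + Rt.card : ℕ) : ℝ) = ((n - 1 : ℕ) : ℝ) := by exact_mod_cast h1
    rwa [Nat.cast_add, Nat.cast_sub (by omega), Nat.cast_one] at h2
  have hfra : ((n:ℝ)-1)*(1/(n:ℝ)) = 1 - 1/(n:ℝ) := by field_simp
  have e3 : B k = A k + 1/(n:ℝ) := by linarith [hlen k]
  have hAeq : A k = (L.card : ℝ) * (1/(n:ℝ)) := by nlinarith [e1, e2, hcard, hfra, e3]
  have h5R := an5R hn x hc hef A B hAB hk
  have h5L := an5L hn x hc hef A B hAB hk
  have hctr : ctr n k.val = ((k.val:ℝ)+1)/(n:ℝ) := rfl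
  rw [hctr] at h5R h5L
  have hup : (L.card : ℝ) ≤ (k.val:ℝ) + 1 := by
    have h6 : A k ≤ ((k.val:ℝ)+1) * (1/(n:ℝ)) := by
      rw [mul_one_div]; exact h5L
    rw [hAeq] at h6
    have h7 : (0:ℝ) < 1/(n:ℝ) := by positivity
    exact le_of_mul_le_mul_right (by linarith) h7
  have hdown : (k.val:ℝ) ≤ (L.card : ℝ) := by
    have h6 : ((k.val:ℝ)) * (1/(n:ℝ)) ≤ A k := by
      rw [mul_one_div]
      have : ((k.val:ℝ)+1)/(n:ℝ) - 1/(n:ℝ) = (k.val:ℝ)/(n:ℝ) := by ring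
      linarith [h5R, e3, this]
    rw [hAeq] at h6
    have h7 : (0:ℝ) < 1/(n:ℝ) := by positivity
    exact le_of_mul_le_mul_right h6 h7
  have hupN : L.card ≤ k.val + 1 := by exact_mod_cast hup
  have hdownN : k.val ≤ L.card := by exact_mod_cast hdown
  rcases (by omega : L.card = k.val ∨ L.card = k.val + 1) with h|h
  · left
    rw [hAeq, h, mul_one_div]
  · right
    rw [hAeq, h, mul_one_div]
    push_cast
    ring_nf

lemma an11mid {i : Fin n} (hi : i.val ≠ n-1) :
    cakeM n i (x.pieces i) = ENNReal.ofReal (1/2) := by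
  have h0 := nR_pos hn
  have he := eps_pos hn
  have h2e := eps_lt_invn hn
  have hlen := an9 hn x hc hef A B hAB i
  have hein : epsn n ≤ 1/(n:ℝ) := by linarith
  have hctr : ctr n i.val = ((i.val:ℝ)+1)/(n:ℝ) := rfl
  have hsplit : ((i.val:ℝ)+1)/(n:ℝ) = (i.val:ℝ)/(n:ℝ) + 1/(n:ℝ) := by ring
  rw [hAB i, cakeM_w_Ioo hn i hi]
  rcases an10 hn x hc hef A B hAB hi with h|h
  · have hBi : B i = ctr n i.val := by
      rw [hctr, hsplit]; linarith
    have hAi : A i ≤ ctr n i.val - epsn n := by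
      rw [hctr, hsplit, h]; linarith
    congr 1
    rw [min_eq_left (by linarith [hBi] : B i ≤ ctr n i.val + epsn n), max_eq_right hAi, hBi]
    rw [show ctr n i.val - (ctr n i.val - epsn n) = epsn n by ring]
    rw [div_eq_iff (by linarith : (2:ℝ)*epsn n ≠ 0)]
    ring
  · have hAi : A i = ctr n i.val := by rw [hctr, h]
    have hBi : ctr n i.val + epsn n ≤ B i := by
      rw [hctr]; linarith
    congr 1
    rw [min_eq_right hBi, max_eq_left (by linarith [hAi] : ctr n i.val - epsn n ≤ A i), hAi]
    rw [show ctr n i.val + epsn n - ctr n i.val = epsn n by ring]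
    rw [div_eq_iff (by linarith : (2:ℝ)*epsn n ≠ 0)]
    ring

lemma an11last {l : Fin n} (hl : l.val = n-1) :
    cakeM n l (x.pieces l) = ENNReal.ofReal (1/(n:ℝ)) := by
  rw [an_len hn x hc hef A B hAB hl, an9 hn x hc hef A B hAB l]

end Analysis

theorem pareto_dominant_partial_division (n : ℕ) (hn : 2 < n) :
    ∃ v : Fin n → Measure ℝ,
      (∀ i, v i (Set.Icc (0:ℝ) 1) = 1) ∧
      (∀ i, ∀ t : ℝ, v i {t} = 0) ∧
      (∀ i, v i (Set.Icc (0:ℝ) 1)ᶜ = 0) ∧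
      ∃ y : ConnDiv n, EnvyFree v y ∧ ¬ y.Complete ∧
        ∀ x : ConnDiv n, x.Complete → EnvyFree v x →
          (∀ i : Fin n, 1 ≤ i.val → i.val ≤ n - 2 →
            v i (y.pieces i) = 2 * v i (x.pieces i)) ∧
          v ⟨0, by omega⟩ (x.pieces ⟨0, by omega⟩) ≤ v ⟨0, by omega⟩ (y.pieces ⟨0, by omega⟩) ∧
          v ⟨n-1, by omega⟩ (x.pieces ⟨n-1, by omega⟩) ≤ v ⟨n-1, by omega⟩ (y.pieces ⟨n-1, by omega⟩) := by
  refine ⟨cakeM n, fun i => cakeM_Icc hn i, fun i t => cakeM_singleton i t,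
    fun i => cakeM_compl hn i, ydiv n hn, ydiv_ef hn, ydiv_not_complete hn, ?_⟩
  intro x hc hef
  choose A B hAB using x.isInterval
  refine ⟨?_, ?_, ?_⟩
  · intro i h1 h2
    have hi1 : i.val ≠ n-1 := by omega
    have hi0 : i.val ≠ 0 := by omega
    rw [ydiv_val_mid hn i hi1 hi0, an11mid hn x hc hef A B hAB hi1]
    rw [show (2:ℝ≥0∞) = ENNReal.ofReal 2 by norm_num, ← ENNReal.ofReal_mul (by norm_num)]
    norm_num
  · rw [an11mid hn x hc hef A B hAB (i := ⟨0, by omega⟩) (by simp; omega),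
      ydiv_val0_own hn _ rfl]
  · rw [an11last hn x hc hef A B hAB (l := ⟨n-1, by omega⟩) rfl, ydiv_last_own hn _ rfl]
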